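/- Let a, b > 0 and 0 < p < 1 with p < min(a/b, b/a). Define φ(α) = a·α + b·p(1-α)/(α + p(1-α)) for α ∈ (0,1). Then the value α₀ = (√(p·b/a) - p)/(1-p) lies in (0,1), and for every α ∈ (0,1) one has φ(α) ≥ φ(α₀) = √p·(2√(ab) - (a+b)√p)/(1-p). -/

import Mathlib

theorem optimal_rate_model1 (a b p : ℝ) (ha : 0 < a) (hb : 0 < b)
    (hp : 0 < p) (hp1 : p < 1) (hpab : p < a / b) (hpba : p < b / a) :
    (0 < (Real.sqrt (p * b / a) - p) / (1 - p) ∧ (Real.sqrt (p * b / a) - p) / (1 - p) < 1) ∧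
    (∀ α : ℝ, 0 < α → α < 1 →
      a * α + b * (p * (1 - α) / (α + p * (1 - α))) ≥
        a * ((Real.sqrt (p * b / a) - p) / (1 - p)) +
          b * (p * (1 - (Real.sqrt (p * b / a) - p) / (1 - p)) /
            ((Real.sqrt (p * b / a) - p) / (1 - p) +
              p * (1 - (Real.sqrt (p * b / a) - p) / (1 - p))))) ∧
    a * ((Real.sqrt (p * b / a) - p) / (1 - p)) +
        b * (p * (1 - (Real.sqrt (p * b / a) - p) / (1 - p)) /
          ((Real.sqrt (p * b / a) - p) / (1 - p) +
            p * (1 - (Real.sqrt (p * b / a) - p) / (1 - p)))) =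
      Real.sqrt p * (2 * Real.sqrt (a * b) - (a + b) * Real.sqrt p) / (1 - p) := by
  set s := Real.sqrt (p * b / a) with hs
  have h1p : (0:ℝ) < 1 - p := by linarith
  have hpba' : p * a < b := by
    rwa [lt_div_iff₀ ha] at hpba
  have hpab' : p * b < a := by
    rwa [lt_div_iff₀ hb] at hpab
  have hs2 : s ^ 2 = p * b / a := Real.sq_sqrt (by positivity)
  have hs_pos : 0 < s := Real.sqrt_pos.mpr (by positivity)
  have hbp : b * p = a * s ^ 2 := by
    rw [hs2]; field_simp
  have hsp : p < s := by
    rw [hs, show (p:ℝ) * b / a = p * (b / a) by ring]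
    nlinarith [Real.sq_sqrt (show (0:ℝ) ≤ p * (b/a) by positivity),
      Real.sqrt_nonneg (p * (b/a)), sq_nonneg (Real.sqrt (p * (b/a)) - p),
      sq_nonneg (Real.sqrt (p * (b/a)) + p)]
  have hs1 : s < 1 := by
    rw [hs, show (1:ℝ) = Real.sqrt 1 by simp]
    apply Real.sqrt_lt_sqrt (by positivity)
    rw [div_lt_one ha]; linarith
  have hα₀ : (0:ℝ) < (s - p) / (1 - p) ∧ (s - p) / (1 - p) < 1 := by
    constructor
    · apply div_pos (by linarith) h1p
    · rw [div_lt_one h1p]; linarith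
  -- denominator at α₀ equals s
  have hden : (s - p) / (1 - p) + p * (1 - (s - p) / (1 - p)) = s := by
    field_simp; ring
  have hval : a * ((s - p) / (1 - p)) +
      b * (p * (1 - (s - p) / (1 - p)) /
        ((s - p) / (1 - p) + p * (1 - (s - p) / (1 - p)))) =
      (2 * a * s - a * p - b * p) / (1 - p) := by
    rw [hden]
    field_simp
    linear_combination hbp
  refine ⟨hα₀, ?_, ?_⟩
  · intro α hα0 hα1
    rw [hval]
    have hD : 0 < α + p * (1 - α) := by nlinarith
    have heq : (a * α + b * (p * (1 - α) / (α + p * (1 - α)))) -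
        (2 * a * s - a * p - b * p) / (1 - p) =
        a * ((α + p * (1 - α)) - s) ^ 2 / ((1 - p) * (α + p * (1 - α))) := by
      field_simp
      linear_combination hbp
    have hge : 0 ≤ a * ((α + p * (1 - α)) - s) ^ 2 / ((1 - p) * (α + p * (1 - α))) := by
      positivity
    linarith
  · rw [hval]
    have hsqp : Real.sqrt p ^ 2 = p := Real.sq_sqrt hp.le
    have hsab : Real.sqrt (a * b) ^ 2 = a * b := Real.sq_sqrt (by positivity)
    have hprod : a * s = Real.sqrt p * Real.sqrt (a * b) := by
      have : (a * s) ^ 2 = (Real.sqrt p * Real.sqrt (a * b)) ^ 2 := by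
        rw [mul_pow, mul_pow, hs2, hsqp, hsab]; field_simp
      have h1 : 0 ≤ a * s := by positivity
      have h2 : 0 ≤ Real.sqrt p * Real.sqrt (a * b) := by positivity
      nlinarith
    have hnum : 2 * a * s - a * p - b * p =
        Real.sqrt p * (2 * Real.sqrt (a * b) - (a + b) * Real.sqrt p) := by
      linear_combination 2 * hprod + (a + b) * hsqp
    rw [hnum]
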